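/- Suppose u : ℝⁿ → ℝ is semiconcave with constant C, v : ℝⁿ → ℝ is semiconvex with constant C, u ≥ v, and A = {x : u(x) = v(x)}. Then the common gradient map x ↦ Du(x) = Dv(x) is Lipschitz on A with Lipschitz constant 4C, i.e. |Du(x₁) − Du(x₂)| ≤ 4C|x₁ − x₂| for all x₁, x₂ ∈ A. -/

import Mathlib

open Set InnerProductSpace
open scoped RealInnerProductSpace

/-- `u` is semiconcave with linear modulus and constant `C` on `ℝⁿ`. -/
def Semiconcave {n : ℕ} (C : ℝ) (u : EuclideanSpace ℝ (Fin n) → ℝ) : Prop :=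
  ∀ x y : EuclideanSpace ℝ (Fin n), ∀ lam ∈ Set.Icc (0:ℝ) 1,
    lam * u x + (1 - lam) * u y - u (lam • x + (1 - lam) • y) ≤
      C / 2 * lam * (1 - lam) * ‖x - y‖ ^ 2

section aux
variable {E : Type*} [NormedAddCommGroup E] [InnerProductSpace ℝ E]

lemma combo_identity (x y : E) (a : ℝ) :
    ‖a • x + (1 - a) • y‖ ^ 2
      = a * ‖x‖ ^ 2 + (1 - a) * ‖y‖ ^ 2 - a * (1 - a) * ‖x - y‖ ^ 2 := by
  simp only [← real_inner_self_eq_norm_sq, inner_add_left, inner_add_right,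
    inner_sub_left, inner_sub_right, real_inner_smul_left, real_inner_smul_right]
  rw [real_inner_comm y x]
  ring

lemma diff_identity (x y : E) :
    ‖y‖ ^ 2 - ‖x‖ ^ 2 = ‖y - x‖ ^ 2 + 2 * ⟪x, y - x⟫_ℝ := by
  simp only [← real_inner_self_eq_norm_sq, inner_sub_left, inner_sub_right]
  rw [real_inner_comm y x]
  ring

end aux

section sub
variable {E : Type*} [NormedAddCommGroup E] [InnerProductSpace ℝ E]

lemma exists_subgradient [FiniteDimensional ℝ E] {φ : E → ℝ}
    (hφ : ConvexOn ℝ Set.univ φ) (x : E) :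
    ∃ p : E, ∀ y, φ x + ⟪p, y - x⟫_ℝ ≤ φ y := by
  have hcont : Continuous φ := by
    have h1 : LocallyLipschitzOn Set.univ φ := hφ.locallyLipschitzOn isOpen_univ
    exact continuousOn_univ.mp h1.continuousOn
  set S : Set (E × ℝ) := {q | φ q.1 < q.2} with hS
  have hSopen : IsOpen S := isOpen_lt (hcont.comp continuous_fst) continuous_snd
  have hSconv : Convex ℝ S := by
    rintro ⟨y₁, t₁⟩ h₁ ⟨y₂, t₂⟩ h₂ a b ha hb hab
    simp only [hS, mem_setOf_eq] at h₁ h₂ ⊢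
    have hc := hφ.2 (mem_univ y₁) (mem_univ y₂) ha hb hab
    have : a * φ y₁ + b * φ y₂ < a * t₁ + b * t₂ := by
      rcases eq_or_lt_of_le ha with h | h
      · have hb1 : b = 1 := by linarith
        simp [← h, hb1, h₂]
      · have : a * φ y₁ < a * t₁ := by nlinarith
        nlinarith [mul_le_mul_of_nonneg_left h₂.le hb]
    calc φ (a • y₁ + b • y₂) ≤ a * φ y₁ + b * φ y₂ := hc
      _ < _ := this
  have hxnot : (x, φ x) ∉ S := by simp [hS]
  obtain ⟨f, hf⟩ := geometric_hahn_banach_point_open hSconv hSopen hxnot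
  have hft : ∀ (y : E) (t : ℝ), f (y, t) = f (y, 0) + t * f (0, 1) := by
    intro y t
    have : (y, t) = (y, (0:ℝ)) + t • ((0:E), (1:ℝ)) := by
      simp [Prod.ext_iff]
    rw [this, map_add, map_smul, smul_eq_mul]
  have key : ∀ (y : E) (t : ℝ), φ y < t → f (x, 0) + φ x * f (0,1) < f (y, 0) + t * f (0,1) := by
    intro y t ht
    have := hf (y, t) ht
    rwa [hft x (φ x), hft y t] at this
  set c := f ((0:E), (1:ℝ)) with hc
  have hcpos : 0 < c := by
    have := key x (φ x + 1) (by linarith)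
    nlinarith
  have main : ∀ y, f (x, 0) + φ x * c ≤ f (y, 0) + φ y * c := by
    intro y
    by_contra hcon
    push_neg at hcon
    set ε := (f (x, 0) + φ x * c - (f (y, 0) + φ y * c)) / 2 with hε
    have hεpos : 0 < ε := by simp only [hε]; linarith
    have := key y (φ y + ε / c) (by linarith [div_pos hεpos hcpos])
    have hmul : (φ y + ε / c) * c = φ y * c + ε := by
      field_simp
    rw [hmul] at this
    simp only [hε] at this
    linarith
  set G : E →L[ℝ] ℝ := f.comp (ContinuousLinearMap.inl ℝ E ℝ) with hG
  have hGval : ∀ z : E, G z = f (z, 0) := fun z => rfl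
  refine ⟨(toDual ℝ E).symm ((-c⁻¹) • G), fun y => ?_⟩
  have hinner : ⟪(toDual ℝ E).symm ((-c⁻¹) • G), y - x⟫_ℝ = -c⁻¹ * (f (y,0) - f (x,0)) := by
    rw [toDual_symm_apply]
    have : ((-c⁻¹) • G) (y - x) = -c⁻¹ * G (y - x) := rfl
    rw [this, map_sub, hGval, hGval]
  rw [hinner]
  have h1 := main y
  have hci : c * c⁻¹ = 1 := mul_inv_cancel₀ hcpos.ne'
  have h2 : c * (φ x + -c⁻¹ * (f (y,0) - f (x,0))) = c * φ x - (f (y,0) - f (x,0)) := by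
    field_simp
    ring
  have h3 : c * (φ x + -c⁻¹ * (f (y,0) - f (x,0))) ≤ c * φ y := by rw [h2]; linarith
  exact le_of_mul_le_mul_left h3 hcpos

end sub

lemma convexOn_of_semiconcave {n : ℕ} {C : ℝ} {w : EuclideanSpace ℝ (Fin n) → ℝ}
    (hw : Semiconcave C w) :
    ConvexOn ℝ Set.univ (fun y => C / 2 * ‖y‖ ^ 2 - w y) := by
  refine ⟨convex_univ, ?_⟩
  intro x _ y _ a b ha hb hab
  have hb1 : b = 1 - a := by linarith
  subst hb1
  have hs := hw x y a ⟨ha, by linarith⟩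
  have hid := combo_identity x y a
  simp only [smul_eq_mul]
  rw [hid]
  nlinarith [hs]

lemma quad_bound {n : ℕ} {C : ℝ} {u v : EuclideanSpace ℝ (Fin n) → ℝ}
    (hu : Semiconcave C u) (hv : Semiconcave C (fun x => -v x))
    (huv : ∀ x, v x ≤ u x) (x : EuclideanSpace ℝ (Fin n)) (hx : u x = v x) :
    ∃ p : EuclideanSpace ℝ (Fin n),
      ∀ y, |u y - u x - ⟪p, y - x⟫_ℝ| ≤ C / 2 * ‖y - x‖ ^ 2 := by
  obtain ⟨a, ha⟩ := exists_subgradient (convexOn_of_semiconcave hu) x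
  obtain ⟨b, hb⟩ := exists_subgradient (convexOn_of_semiconcave hv) x
  -- upper bound for u
  have upper : ∀ y, u y ≤ u x + ⟪(C • x - a : EuclideanSpace ℝ (Fin n)), y - x⟫_ℝ
      + C / 2 * ‖y - x‖ ^ 2 := by
    intro y
    have h1 := ha y
    have h2 := diff_identity x y
    have h2' : C / 2 * ‖y‖ ^ 2 - C / 2 * ‖x‖ ^ 2
        = C / 2 * ‖y - x‖ ^ 2 + C * ⟪x, y - x⟫_ℝ := by linear_combination (C / 2) * h2
    simp only [inner_sub_left, real_inner_smul_left] at *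
    linarith
  have lower : ∀ y, u x + ⟪(b - C • x : EuclideanSpace ℝ (Fin n)), y - x⟫_ℝ
      - C / 2 * ‖y - x‖ ^ 2 ≤ u y := by
    intro y
    have h1 := hb y
    have h2 := diff_identity x y
    have h3 := huv y
    have h2' : C / 2 * ‖y‖ ^ 2 - C / 2 * ‖x‖ ^ 2
        = C / 2 * ‖y - x‖ ^ 2 + C * ⟪x, y - x⟫_ℝ := by linear_combination (C / 2) * h2
    simp only [inner_sub_left, real_inner_smul_left] at *
    linarith
  set q : EuclideanSpace ℝ (Fin n) := b - C • x with hq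
  set r : EuclideanSpace ℝ (Fin n) := C • x - a with hr
  have key : ∀ y, ⟪q - r, y - x⟫_ℝ ≤ C * ‖y - x‖ ^ 2 := by
    intro y
    have h1 := lower y
    have h2 := upper y
    rw [inner_sub_left]
    linarith
  have hqr : q = r := by
    set t : ℝ := (|C| + 1)⁻¹ with hts
    have ht : 0 < t := by positivity
    have hCt : C * t < 1 := by
      have h1 : C * t ≤ |C| * t := by
        apply mul_le_mul_of_nonneg_right (le_abs_self C) ht.le
      have h2 : |C| * t < 1 := by
        rw [hts, mul_inv_lt_iff₀ (by positivity)]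
        simp [abs_nonneg]
      linarith
    have hk := key (x + t • (q - r))
    rw [add_sub_cancel_left] at hk
    rw [real_inner_smul_right, real_inner_self_eq_norm_sq, norm_smul] at hk
    rw [Real.norm_eq_abs, abs_of_pos ht] at hk
    have h5 : C * (t * ‖q - r‖) ^ 2 = (C * t) * (t * ‖q - r‖ ^ 2) := by ring
    rw [h5] at hk
    have hn : ‖q - r‖ ^ 2 ≤ 0 := by
      by_contra hpos
      push_neg at hpos
      have hA : 0 < t * ‖q - r‖ ^ 2 := mul_pos ht hpos
      have hB := mul_pos (show (0:ℝ) < 1 - C * t by linarith) hA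
      nlinarith [hk]
    have h6 : ‖q - r‖ ^ 2 = 0 := le_antisymm hn (sq_nonneg _)
    have h7 : ‖q - r‖ = 0 := by
      have := sq_eq_zero_iff.mp h6
      exact this
    rw [← sub_eq_zero]
    exact norm_eq_zero.mp h7
  refine ⟨q, fun y => abs_le.mpr ⟨?_, ?_⟩⟩
  · have := lower y; linarith
  · have := upper y; rw [hqr]; linarith

lemma gradient_eq_of_quad {n : ℕ} {C : ℝ} {u : EuclideanSpace ℝ (Fin n) → ℝ}
    {p x : EuclideanSpace ℝ (Fin n)}
    (h : ∀ y, |u y - u x - ⟪p, y - x⟫_ℝ| ≤ C / 2 * ‖y - x‖ ^ 2) :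
    gradient u x = p := by
  apply HasGradientAt.gradient
  rw [hasGradientAt_iff_isLittleO, Asymptotics.isLittleO_iff]
  intro ε hε
  have hδ : 0 < ε / (|C| / 2 + 1) := by positivity
  filter_upwards [Metric.ball_mem_nhds x hδ] with y hy
  rw [Metric.mem_ball, dist_eq_norm] at hy
  have h1 := h y
  have h2 : |C| / 2 * (ε / (|C| / 2 + 1)) ≤ ε := by
    rw [div_mul_div_comm, div_le_iff₀ (by positivity)]
    nlinarith [abs_nonneg C, hε.le]
  have h3 : C / 2 * ‖y - x‖ ^ 2 ≤ |C| / 2 * ‖y - x‖ * ‖y - x‖ := by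
    nlinarith [le_abs_self C, sq_nonneg ‖y - x‖, norm_nonneg (y - x)]
  have h4 : |C| / 2 * ‖y - x‖ ≤ ε := by
    nlinarith [abs_nonneg C, norm_nonneg (y - x)]
  rw [Real.norm_eq_abs]
  calc |u y - u x - ⟪p, y - x⟫_ℝ| ≤ C / 2 * ‖y - x‖ ^ 2 := h1
    _ ≤ |C| / 2 * ‖y - x‖ * ‖y - x‖ := h3
    _ ≤ ε * ‖y - x‖ := by nlinarith [norm_nonneg (y - x)]

set_option maxHeartbeats 1000000 in
theorem stmt2 {n : ℕ} (C : ℝ) (u v : EuclideanSpace ℝ (Fin n) → ℝ)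
    (hu : Semiconcave C u) (hv : Semiconcave C (fun x => -v x))
    (huv : ∀ x, v x ≤ u x) (A : Set (EuclideanSpace ℝ (Fin n)))
    (hA : A = {x | u x = v x}) :
    ∀ x₁ ∈ A, ∀ x₂ ∈ A,
      ‖gradient u x₁ - gradient u x₂‖ ≤ 4 * C * ‖x₁ - x₂‖ := by
  subst hA
  intro x₁ hx₁ x₂ hx₂
  simp only [Set.mem_setOf_eq] at hx₁ hx₂
  by_cases h12 : x₁ = x₂
  · subst h12
    simp only [sub_self, norm_zero, mul_zero]
    exact le_refl 0
  obtain ⟨p₁, h₁⟩ := quad_bound hu hv huv x₁ hx₁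
  obtain ⟨p₂, h₂⟩ := quad_bound hu hv huv x₂ hx₂
  rw [gradient_eq_of_quad h₁, gradient_eq_of_quad h₂]
  set d := ‖x₁ - x₂‖ with hd
  have hdpos : 0 < d := by
    rw [hd]; exact norm_pos_iff.mpr (sub_ne_zero_of_ne h12)
  have hx21 : ‖x₂ - x₁‖ = d := by rw [hd, norm_sub_rev]
  have hC : 0 ≤ C := by
    have ht := h₁ x₂
    have h0 : (0:ℝ) ≤ |u x₂ - u x₁ - ⟪p₁, x₂ - x₁⟫_ℝ| := abs_nonneg _
    rw [hx21] at ht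
    nlinarith [mul_pos hdpos hdpos]
  by_cases hp : p₁ = p₂
  · rw [hp, sub_self, norm_zero]; positivity
  set s := p₁ - p₂ with hs
  have hsnorm : 0 < ‖s‖ := norm_pos_iff.mpr (sub_ne_zero_of_ne hp)
  set y := x₂ + (d / ‖s‖) • s with hy
  have hyx2 : y - x₂ = (d / ‖s‖) • s := by rw [hy]; abel
  have hyx1 : y - x₁ = (x₂ - x₁) + (d / ‖s‖) • s := by rw [hy]; abel
  have hn2 : ‖y - x₂‖ = d := by
    rw [hyx2, norm_smul, Real.norm_eq_abs, abs_of_pos (by positivity),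
      div_mul_cancel₀ _ hsnorm.ne']
  have hn1 : ‖y - x₁‖ ≤ 2 * d := by
    calc ‖y - x₁‖ = ‖(y - x₂) + (x₂ - x₁)‖ := by rw [sub_add_sub_cancel]
      _ ≤ ‖y - x₂‖ + ‖x₂ - x₁‖ := norm_add_le _ _
      _ = 2 * d := by rw [hn2, hx21]; ring
  have e1 : u x₁ + ⟪p₁, y - x₁⟫_ℝ - C / 2 * ‖y - x₁‖ ^ 2 ≤ u y := by
    have := (abs_le.mp (h₁ y)).1; linarith
  have e2 : u y ≤ u x₂ + ⟪p₂, y - x₂⟫_ℝ + C / 2 * d ^ 2 := by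
    have := (abs_le.mp (h₂ y)).2; rw [← hn2]; linarith
  have e3 : u x₂ ≤ u x₁ + ⟪p₁, x₂ - x₁⟫_ℝ + C / 2 * d ^ 2 := by
    have := (abs_le.mp (h₁ x₂)).2; rw [← hx21]; linarith
  have hps : ⟪p₁, s⟫_ℝ - ⟪p₂, s⟫_ℝ = ‖s‖ ^ 2 := by
    rw [← inner_sub_left, ← hs, real_inner_self_eq_norm_sq]
  have haux : (d / ‖s‖) * ‖s‖ ^ 2 = d * ‖s‖ := by
    field_simp
  have hinner : ⟪p₁, y - x₁⟫_ℝ - ⟪p₁, x₂ - x₁⟫_ℝ - ⟪p₂, y - x₂⟫_ℝ = d * ‖s‖ := by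
    rw [hyx1, hyx2, inner_add_right, real_inner_smul_right, real_inner_smul_right]
    linear_combination (d / ‖s‖) * hps + haux
  have hsq1 : ‖y - x₁‖ ^ 2 ≤ 4 * d ^ 2 := by nlinarith [norm_nonneg (y - x₁), hn1]
  have hstep : C / 2 * ‖y - x₁‖ ^ 2 ≤ C / 2 * (4 * d ^ 2) :=
    mul_le_mul_of_nonneg_left hsq1 (by linarith)
  have hfinal : d * ‖s‖ ≤ 3 * C * d ^ 2 := by linarith
  nlinarith [hfinal, hdpos, hC, mul_pos hdpos hdpos]
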